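/- The function φ : ℝ → [0,∞) defined by φ(t) := Σ_{k=1}^∞ sin²(πt/2^k) is Lipschitz continuous with Lipschitz constant π, i.e. |φ(x) − φ(y)| ≤ π|x − y| for all x, y ∈ ℝ. -/

import Mathlib

open Real Filter Topology

/-- The function `φ(t) = ∑_{k=1}^∞ sin²(π t / 2^k)`. -/
noncomputable def levitanPhi (t : ℝ) : ℝ :=
  ∑' k : ℕ, Real.sin (Real.pi * t / 2 ^ (k + 1)) ^ 2

lemma levitan_geom_summable (c : ℝ) :
    Summable (fun k : ℕ => c * (1/2 : ℝ) ^ (k + 1)) := by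
  have h : (fun k : ℕ => c * (1/2:ℝ) ^ (k+1)) = fun k : ℕ => (c * (1/2)) * (1/2:ℝ) ^ k := by
    funext k; ring
  rw [h]
  exact (summable_geometric_of_lt_one (r := (1/2:ℝ)) (by norm_num) (by norm_num)).mul_left _

lemma levitan_summable (t : ℝ) :
    Summable (fun k : ℕ => Real.sin (Real.pi * t / 2 ^ (k + 1)) ^ 2) := by
  apply Summable.of_nonneg_of_le (fun k => sq_nonneg _)
    (f := fun k : ℕ => (Real.pi * t) ^ 2 * (1/4 : ℝ) ^ k)
  · intro k
    have h := Real.sin_sq_le_sq (x := Real.pi * t / 2 ^ (k + 1))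
    refine h.trans ?_
    have h2 : ((2:ℝ) ^ (k+1)) ^ 2 = (4:ℝ) ^ (k+1) := by
      rw [← pow_mul, mul_comm, pow_mul]; norm_num
    have e : (Real.pi * t / 2 ^ (k + 1)) ^ 2 = (Real.pi * t) ^ 2 * (1/4 : ℝ) ^ (k+1) := by
      rw [div_pow, h2, ← mul_one_div, ← one_div_pow]
    rw [e]
    have hp : (1/4:ℝ) ^ (k+1) ≤ (1/4:ℝ) ^ k := by
      rw [pow_succ]
      nlinarith [pow_nonneg (by norm_num : (0:ℝ) ≤ 1/4) k]
    exact mul_le_mul_of_nonneg_left hp (sq_nonneg _)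
  · exact (summable_geometric_of_lt_one (r := (1/4:ℝ)) (by norm_num) (by norm_num)).mul_left _

lemma sin_sq_sub_sin_sq' (a b : ℝ) :
    Real.sin a ^ 2 - Real.sin b ^ 2 = Real.sin (a + b) * Real.sin (a - b) := by
  have h1 := Real.sin_sq_add_cos_sq a; have h2 := Real.sin_sq_add_cos_sq b
  rw [Real.sin_add, Real.sin_sub]; nlinarith

/-- `φ` is Lipschitz continuous with Lipschitz constant `π`. -/
theorem stmt0 (x y : ℝ) : |levitanPhi x - levitanPhi y| ≤ Real.pi * |x - y| := by
  have hx := levitan_summable x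
  have hy := levitan_summable y
  have hsub : levitanPhi x - levitanPhi y
      = ∑' k : ℕ, (Real.sin (Real.pi * x / 2 ^ (k + 1)) ^ 2
        - Real.sin (Real.pi * y / 2 ^ (k + 1)) ^ 2) := (Summable.tsum_sub hx hy).symm
  set f := fun k : ℕ => (Real.sin (Real.pi * x / 2 ^ (k + 1)) ^ 2
        - Real.sin (Real.pi * y / 2 ^ (k + 1)) ^ 2) with hf
  have hbound : ∀ k : ℕ, |f k| ≤ Real.pi * |x - y| * (1/2 : ℝ) ^ (k + 1) := by
    intro k
    have hid : f k = Real.sin (Real.pi * x / 2 ^ (k + 1) + Real.pi * y / 2 ^ (k + 1))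
        * Real.sin (Real.pi * x / 2 ^ (k + 1) - Real.pi * y / 2 ^ (k + 1)) :=
      sin_sq_sub_sin_sq' _ _
    rw [hid, abs_mul]
    have h1 : |Real.sin (Real.pi * x / 2 ^ (k + 1) + Real.pi * y / 2 ^ (k + 1))| ≤ 1 :=
      Real.abs_sin_le_one _
    have h2 : |Real.sin (Real.pi * x / 2 ^ (k + 1) - Real.pi * y / 2 ^ (k + 1))|
        ≤ Real.pi * |x - y| * (1/2 : ℝ) ^ (k + 1) := by
      refine (Real.abs_sin_le_abs).trans ?_
      have heq : Real.pi * x / 2 ^ (k + 1) - Real.pi * y / 2 ^ (k + 1)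
          = Real.pi * (x - y) * ((1/2 : ℝ)) ^ (k + 1) := by
        field_simp
        have h2k : (2:ℝ)^(k+1) * (1/2)^(k+1) = 1 := by rw [← mul_pow]; norm_num
        linear_combination (-(x - y)) * h2k
      rw [heq, abs_mul, abs_mul, abs_of_nonneg Real.pi_pos.le,
        abs_of_nonneg (by positivity : (0:ℝ) ≤ (1/2 : ℝ) ^ (k+1)), mul_assoc]
    calc |Real.sin (Real.pi * x / 2 ^ (k + 1) + Real.pi * y / 2 ^ (k + 1))|
          * |Real.sin (Real.pi * x / 2 ^ (k + 1) - Real.pi * y / 2 ^ (k + 1))|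
        ≤ 1 * (Real.pi * |x - y| * (1/2 : ℝ) ^ (k + 1)) :=
          mul_le_mul h1 h2 (abs_nonneg _) zero_le_one
      _ = Real.pi * |x - y| * (1/2 : ℝ) ^ (k + 1) := one_mul _
  have hgsum : Summable (fun k : ℕ => Real.pi * |x - y| * (1/2 : ℝ) ^ (k + 1)) :=
    levitan_geom_summable _
  have hfsum : Summable fun k => |f k| :=
    Summable.of_nonneg_of_le (fun k => abs_nonneg _) hbound hgsum
  have habs : |∑' k, f k| ≤ ∑' k, |f k| := by
    have h' : Summable fun k => ‖f k‖ := by simpa [Real.norm_eq_abs] using hfsum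
    have := norm_tsum_le_tsum_norm (f := f) h'
    simpa [Real.norm_eq_abs] using this
  have hle : ∑' k, |f k| ≤ ∑' k : ℕ, Real.pi * |x - y| * (1/2 : ℝ) ^ (k + 1) :=
    Summable.tsum_le_tsum hbound hfsum hgsum
  have hgeo : ∑' k : ℕ, Real.pi * |x - y| * (1/2 : ℝ) ^ (k + 1) = Real.pi * |x - y| := by
    rw [tsum_mul_left]
    have hone : ∑' k : ℕ, ((1:ℝ)/2) ^ (k + 1) = 1 := by
      have h : (fun k : ℕ => ((1:ℝ)/2) ^ (k+1)) = fun k : ℕ => ((1:ℝ)/2) * ((1:ℝ)/2) ^ k := by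
        funext k; ring
      rw [h, tsum_mul_left, tsum_geometric_of_lt_one (r := (1/2:ℝ)) (by norm_num) (by norm_num)]
      norm_num
    rw [hone, mul_one]
  rw [hsub]
  calc |∑' k, f k| ≤ ∑' k, |f k| := habs
    _ ≤ ∑' k : ℕ, Real.pi * |x - y| * (1/2 : ℝ) ^ (k + 1) := hle
    _ = Real.pi * |x - y| := hgeo
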